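/- Sandwich between conditional entropies: Fix 0 < α < 1 and let (X,Y) be a pair of discrete random variables on countable alphabets. Define H^{(α)}(X|Y) = (α/(1−α)) log(∑_y P_Y(y) exp(((1−α)/α) H(P_{X|Y=y}))) and Arimoto's conditional Rényi entropy H_α(X|Y) = (α/(1−α)) log(∑_y (∑_x P_{X,Y}(x,y)^α)^{1/α}). Then H(X|Y) ≤ H^{(α)}(X|Y) ≤ H_α(X|Y), where H(X|Y) is the Shannon conditional entropy. -/

import Mathlib

lemma jensen_exp2 {ι : Type*} (w t : ι → ℝ)
    (hw : ∀ i, 0 ≤ w i) (hw1 : ∑' i, w i = 1)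
    (hwt : Summable fun i => w i * t i)
    (hf : Summable fun i => w i * (2:ℝ) ^ (t i)) :
    (2:ℝ) ^ (∑' i, w i * t i) ≤ ∑' i, w i * (2:ℝ) ^ (t i) := by
  have hwsum : Summable w := by
    by_contra h
    rw [tsum_eq_zero_of_not_summable h] at hw1; norm_num at hw1
  set M := ∑' i, w i * t i with hM
  set g : ι → ℝ := fun i =>
    ((2:ℝ)^M * (1 - Real.log 2 * M)) * w i + ((2:ℝ)^M * Real.log 2) * (w i * t i) with hg
  have hgs : Summable g := (hwsum.mul_left _).add (hwt.mul_left _)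
  have key : ∀ i, g i ≤ w i * (2:ℝ) ^ (t i) := by
    intro i
    have h1 : (1 : ℝ) + Real.log 2 * (t i - M) ≤ (2:ℝ) ^ (t i - M) := by
      rw [Real.rpow_def_of_pos (by norm_num : (0:ℝ) < 2)]
      have := Real.add_one_le_exp (Real.log 2 * (t i - M))
      linarith
    have h2 : w i * ((2:ℝ)^M * (1 + Real.log 2 * (t i - M))) ≤
        w i * ((2:ℝ)^M * (2:ℝ)^(t i - M)) := by
      apply mul_le_mul_of_nonneg_left _ (hw i)
      exact mul_le_mul_of_nonneg_left h1 (Real.rpow_nonneg (by norm_num) _)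
    have h3 : (2:ℝ)^M * (2:ℝ)^(t i - M) = (2:ℝ)^(t i) := by
      rw [← Real.rpow_add (by norm_num : (0:ℝ) < 2)]; ring_nf
    calc g i = w i * ((2:ℝ)^M * (1 + Real.log 2 * (t i - M))) := by simp only [hg]; ring
    _ ≤ w i * ((2:ℝ)^M * (2:ℝ)^(t i - M)) := h2
    _ = w i * (2:ℝ)^(t i) := by rw [h3]
  have hsum_g : ∑' i, g i = (2:ℝ)^M := by
    rw [hg, Summable.tsum_add (hwsum.mul_left _) (hwt.mul_left _), tsum_mul_left, tsum_mul_left,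
      hw1, ← hM]
    ring
  calc (2:ℝ)^M = ∑' i, g i := hsum_g.symm
  _ ≤ ∑' i, w i * (2:ℝ)^(t i) := Summable.tsum_le_tsum key hgs hf

/-- Sandwich `H(X|Y) ≤ H^{(α)}(X|Y) ≤ H_α(X|Y)` between the Shannon conditional
entropy, the `α`-averaged conditional Shannon entropy, and Arimoto's conditional
Rényi entropy, for `0 < α < 1` (base-2 logarithms/exponentials). -/
theorem conditional_entropy_sandwich
    {X Y : Type*} [Countable X] [Countable Y]
    (p : X → Y → ℝ) (pY : Y → ℝ) (α : ℝ)
    (hα0 : 0 < α) (hα1 : α < 1)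
    (hp : ∀ x y, 0 ≤ p x y)
    (hpY : ∀ y, pY y = ∑' x, p x y)
    (hpYpos : ∀ y, 0 < pY y)
    (hsum : ∑' y, pY y = 1)
    (HXY : ℝ) (Hy : Y → ℝ) (HαKN HαA : ℝ)
    (hH : HXY = ∑' y, ∑' x, p x y * Real.logb 2 (pY y / p x y))
    (hHy : ∀ y, Hy y = ∑' x, (p x y / pY y) * Real.logb 2 (pY y / p x y))
    (hKN : HαKN = (α / (1 - α)) *
      Real.logb 2 (∑' y, pY y * (2 : ℝ) ^ (((1 - α) / α) * Hy y)))
    (hA : HαA = (α / (1 - α)) *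
      Real.logb 2 (∑' y, (∑' x, p x y ^ α) ^ (1 / α)))
    (hs1 : Summable fun z : Y × X => p z.2 z.1 * Real.logb 2 (pY z.1 / p z.2 z.1))
    (hs2 : Summable fun y => pY y * (2 : ℝ) ^ (((1 - α) / α) * Hy y))
    (hs3 : ∀ y, Summable fun x => p x y ^ α)
    (hs4 : Summable fun y => (∑' x, p x y ^ α) ^ (1 / α)) :
    HXY ≤ HαKN ∧ HαKN ≤ HαA := by
  have h1α : (0:ℝ) < 1 - α := by linarith
  have hc : (0:ℝ) < (1 - α) / α := div_pos h1α hα0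
  have hαne : α ≠ 0 := ne_of_gt hα0
  have hpys : ∀ y, Summable fun x => p x y := by
    intro y
    by_contra h
    have h0 := tsum_eq_zero_of_not_summable h
    have h2 := hpYpos y
    rw [hpY y, h0] at h2
    exact lt_irrefl _ h2
  have hs1' : ∀ y, Summable fun x => p x y * Real.logb 2 (pY y / p x y) :=
    fun y => hs1.prod_factor y
  have hpyHy : ∀ y, pY y * Hy y = ∑' x, p x y * Real.logb 2 (pY y / p x y) := by
    intro y
    rw [hHy y, ← tsum_mul_left]
    congr 1; ext x
    field_simp
    rw [mul_assoc]
    exact mul_div_cancel_left₀ _ (ne_of_gt (hpYpos y))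
  have hm : ∑' y, pY y * Hy y = HXY := by
    rw [hH]; exact tsum_congr fun y => hpyHy y
  have hsHyOut : Summable fun y => pY y * Hy y := by
    have hnn : ∀ z : Y × X, 0 ≤ p z.2 z.1 * Real.logb 2 (pY z.1 / p z.2 z.1) := by
      intro z
      obtain ⟨y, x⟩ := z
      rcases eq_or_lt_of_le (hp x y) with h | h
      · simp [← h]
      · apply mul_nonneg (hp x y)
        apply Real.logb_nonneg (by norm_num)
        rw [le_div_iff₀ h, one_mul, hpY y]
        exact Summable.le_tsum (hpys y) x (fun x' _ => hp x' y)
    exact ((summable_prod_of_nonneg hnn).mp hs1).2.congr fun y => (hpyHy y).symm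
  -- Part 1: Jensen over Y
  have hwt1 : Summable fun y => pY y * ((1 - α) / α * Hy y) :=
    (hsHyOut.mul_left ((1 - α) / α)).congr (fun y => by ring)
  have hm1 : ∑' y, pY y * ((1 - α) / α * Hy y) = (1 - α) / α * HXY := by
    rw [← hm, ← tsum_mul_left]
    exact tsum_congr fun y => by ring
  have hJ1 := jensen_exp2 pY (fun y => (1 - α) / α * Hy y)
    (fun y => le_of_lt (hpYpos y)) hsum hwt1 hs2
  rw [hm1] at hJ1
  have hSpos : (0:ℝ) < ∑' y, pY y * (2:ℝ) ^ ((1 - α) / α * Hy y) :=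
    lt_of_lt_of_le (Real.rpow_pos_of_pos (by norm_num) _) hJ1
  have hαdiv : α / (1 - α) * ((1 - α) / α) = 1 := by field_simp
  have hαfracnn : (0:ℝ) ≤ α / (1 - α) := le_of_lt (div_pos hα0 h1α)
  have part1 : HXY ≤ HαKN := by
    have hlog : (1 - α) / α * HXY ≤ Real.logb 2 (∑' y, pY y * (2:ℝ) ^ ((1 - α) / α * Hy y)) := by
      have h := Real.logb_le_logb_of_le (by norm_num : (1:ℝ) < 2)
        (Real.rpow_pos_of_pos (by norm_num) _) hJ1
      rwa [Real.logb_rpow (by norm_num) (by norm_num)] at h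
    have h := mul_le_mul_of_nonneg_left hlog hαfracnn
    rw [← mul_assoc, hαdiv, one_mul] at h
    rw [hKN]; exact h
  -- Part 2: pointwise Jensen on fibers
  have part2key : ∀ y, pY y * (2:ℝ) ^ ((1 - α) / α * Hy y) ≤ (∑' x, p x y ^ α) ^ (1/α) := by
    intro y
    have hpypos := hpYpos y
    have hpyne : pY y ≠ 0 := ne_of_gt hpypos
    have hpynn : (0:ℝ) ≤ pY y := le_of_lt hpypos
    set w : X → ℝ := fun x => p x y / pY y with hwdef
    set t : X → ℝ := fun x => (1 - α) * Real.logb 2 (pY y / p x y) with htdef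
    have hwnn : ∀ x, 0 ≤ w x := fun x => div_nonneg (hp x y) hpynn
    have hw1 : ∑' x, w x = 1 := by
      simp only [hwdef, div_eq_mul_inv]
      rw [tsum_mul_right, ← hpY y, mul_inv_cancel₀ hpyne]
    have hwt : Summable fun x => w x * t x := by
      apply ((hs1' y).mul_left ((1 - α) / pY y)).congr
      intro x
      simp only [hwdef, htdef]
      field_simp
    have hfeq : ∀ x, w x * (2:ℝ) ^ (t x) = (p x y / pY y) ^ α := by
      intro x
      rcases eq_or_lt_of_le (hp x y) with h | h
      · simp only [hwdef, htdef, ← h]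
        simp [Real.zero_rpow hαne]
      · have hq : (0:ℝ) < p x y / pY y := div_pos h hpypos
        have hr : (0:ℝ) < pY y / p x y := div_pos hpypos h
        have h2 : (2:ℝ) ^ (t x) = (pY y / p x y) ^ (1 - α) := by
          simp only [htdef]
          rw [mul_comm, Real.rpow_mul (by norm_num : (0:ℝ) ≤ 2),
            Real.rpow_logb (by norm_num) (by norm_num) hr]
        have h3 : (pY y / p x y) ^ (1 - α) = (p x y / pY y) ^ (α - 1) := by
          rw [show pY y / p x y = (p x y / pY y)⁻¹ by rw [inv_div],
            Real.inv_rpow (le_of_lt hq), ← Real.rpow_neg (le_of_lt hq)]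
          congr 1; ring
        have h4 : w x = (p x y / pY y) ^ (1:ℝ) := by
          rw [Real.rpow_one]
        rw [h2, h3, h4, ← Real.rpow_add hq]
        norm_num
    have hfs : Summable fun x => w x * (2:ℝ) ^ (t x) := by
      apply Summable.congr ((hs3 y).div_const (pY y ^ α))
      intro x
      exact ((Real.div_rpow (hp x y) hpynn α).symm).trans (hfeq x).symm
    have hwtsum : ∑' x, w x * t x = (1 - α) * Hy y := by
      rw [hHy y, ← tsum_mul_left]
      exact tsum_congr fun x => by simp only [hwdef, htdef]; ring
    have hJ2 := jensen_exp2 w t hwnn hw1 hwt hfs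
    rw [hwtsum] at hJ2
    have htsum_eq : ∑' x, w x * (2:ℝ) ^ (t x) = (∑' x, p x y ^ α) / pY y ^ α := by
      rw [tsum_congr (fun x => (hfeq x).trans (Real.div_rpow (hp x y) hpynn α))]
      exact tsum_div_const
    rw [htsum_eq] at hJ2
    have h5 : pY y ^ α * (2:ℝ) ^ ((1 - α) * Hy y) ≤ ∑' x, p x y ^ α := by
      rw [← le_div_iff₀' (Real.rpow_pos_of_pos hpypos α)]
      exact hJ2
    have h6 := Real.rpow_le_rpow
      (mul_nonneg (Real.rpow_nonneg hpynn α) (Real.rpow_nonneg (by norm_num) _))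
      h5 (le_of_lt (one_div_pos.mpr hα0))
    calc pY y * (2:ℝ) ^ ((1 - α) / α * Hy y)
        = (pY y ^ α * (2:ℝ) ^ ((1 - α) * Hy y)) ^ (1/α) := by
          rw [Real.mul_rpow (Real.rpow_nonneg hpynn α) (Real.rpow_nonneg (by norm_num) _),
            ← Real.rpow_mul hpynn, ← Real.rpow_mul (by norm_num : (0:ℝ) ≤ 2)]
          rw [mul_one_div, div_self hαne, Real.rpow_one]
          congr 1
          field_simp
      _ ≤ (∑' x, p x y ^ α) ^ (1/α) := h6
  -- conclude
  have hST := Summable.tsum_le_tsum part2key hs2 hs4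
  have part2 : HαKN ≤ HαA := by
    rw [hKN, hA]
    apply mul_le_mul_of_nonneg_left _ hαfracnn
    exact Real.logb_le_logb_of_le (by norm_num : (1:ℝ) < 2) hSpos hST
  exact ⟨part1, part2⟩
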